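/- Let D be a non-trivial reversible (v,k,λ)-difference set in a finite abelian group G (so D^(−1) = D and k − λ > 1). Then λ is even. (Hint: pair each non-identity element g with g⁻¹; each representation g = xy⁻¹ with x,y ∈ D yields a representation g⁻¹ = yx⁻¹, and for elements g with g = g⁻¹ the representations pair up.) -/

import Mathlib

def IsDiffSet {G : Type*} [Group G] [Fintype G] [DecidableEq G]
    (v k l : ℕ) (D : Finset G) : Prop :=
  Fintype.card G = v ∧ D.card = k ∧
    ∀ g : G, g ≠ 1 → ((D ×ˢ D).filter (fun p => p.1 * p.2⁻¹ = g)).card = l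

/-- A finset with a fixed-point-free involution has even cardinality. -/
lemma even_card_of_invol {α : Type*} [DecidableEq α] (f : α → α) :
    ∀ s : Finset α, (∀ a ∈ s, f a ∈ s) → (∀ a ∈ s, f (f a) = a) →
      (∀ a ∈ s, f a ≠ a) → Even s.card := by
  intro s
  induction s using Finset.strongInduction with
  | _ s ih =>
    intro hmem hinv hne
    rcases s.eq_empty_or_nonempty with rfl | ⟨a, ha⟩
    · simp
    · have hfa : f a ∈ s := hmem a ha
      have hfane : f a ≠ a := hne a ha
      set t := (s.erase a).erase (f a) with ht
      have htsub : t ⊆ s := fun x hx => Finset.mem_of_mem_erase (Finset.mem_of_mem_erase hx)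
      have htss : t ⊂ s := by
        refine Finset.ssubset_iff_of_subset htsub |>.mpr ⟨a, ha, ?_⟩
        simp [ht]
      have htmem : ∀ x, x ∈ t ↔ x ∈ s ∧ x ≠ a ∧ x ≠ f a := by
        intro x; simp [ht]; tauto
      have h1 : ∀ b ∈ t, f b ∈ t := by
        intro b hb
        rw [htmem] at hb ⊢
        obtain ⟨hbs, hba, hbfa⟩ := hb
        refine ⟨hmem b hbs, ?_, ?_⟩
        · intro h; apply hbfa; rw [← h, hinv b hbs]
        · intro h
          have := congrArg f h
          rw [hinv b hbs, hinv a ha] at this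
          exact hba this
      have h2 : ∀ b ∈ t, f (f b) = b := fun b hb => hinv b (htsub hb)
      have h3 : ∀ b ∈ t, f b ≠ b := fun b hb => hne b (htsub hb)
      have hcard : s.card = t.card + 2 := by
        have e1 : (s.erase a).card = s.card - 1 := Finset.card_erase_of_mem ha
        have e2 : t.card = (s.erase a).card - 1 :=
          Finset.card_erase_of_mem (Finset.mem_erase.mpr ⟨hfane, hfa⟩)
        have : 1 ≤ s.card := Finset.card_pos.mpr ⟨a, ha⟩
        have : 2 ≤ s.card := Finset.one_lt_card.mpr ⟨a, ha, f a, hfa, fun h => hfane h.symm⟩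
        omega
      obtain ⟨c, hc⟩ := ih t htss h1 h2 h3
      exact ⟨c + 1, by omega⟩

/-- A non-trivial reversible abelian difference set has even `λ`. -/
theorem stmt16 {G : Type*} [CommGroup G] [Fintype G] [DecidableEq G]
    (v k l : ℕ) (D : Finset G) (hD : IsDiffSet v k l D)
    (hrev : D.image (fun x => x⁻¹) = D) (hn : 1 < k - l) :
    Even l := by
  obtain ⟨hv, hk, hl⟩ := hD
  have hDinv : ∀ x : G, x ∈ D → x⁻¹ ∈ D := by
    intro x hx
    rw [← hrev]
    exact Finset.mem_image_of_mem _ hx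
  by_cases hI : ∃ g : G, g ≠ 1 ∧ g * g = 1
  · -- there is an involution g; swap pairing gives even λ
    obtain ⟨g, hg1, hg2⟩ := hI
    have hginv : g⁻¹ = g := by
      rw [inv_eq_iff_mul_eq_one, hg2]
    rw [← hl g hg1]
    apply even_card_of_invol (fun p => (p.2, p.1))
    · intro p hp
      simp only [Finset.mem_filter, Finset.mem_product] at hp ⊢
      refine ⟨⟨hp.1.2, hp.1.1⟩, ?_⟩
      have : p.2 * p.1⁻¹ = (p.1 * p.2⁻¹)⁻¹ := by group
      rw [this, hp.2, hginv]
    · intro p _; rfl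
    · intro p hp h
      simp only [Finset.mem_filter, Finset.mem_product] at hp
      have h1 : p.2 = p.1 := congrArg Prod.fst h
      rw [h1, mul_inv_cancel] at hp
      exact hg1 hp.2.symm
  · -- no involutions: squaring is injective
    push_neg at hI
    have hsq_inj : Function.Injective (fun x : G => x * x) := by
      intro x y hxy
      by_contra hne
      have hxy1 : x * y⁻¹ ≠ 1 := fun h => hne (mul_inv_eq_one.mp h)
      apply hI _ hxy1
      have hxy' : x * x = y * y := hxy
      have heq : (x * y⁻¹) * (x * y⁻¹) = (x * x) * (y * y)⁻¹ := by
        simp [mul_inv_rev, mul_assoc, mul_comm, mul_left_comm]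
      rw [heq, hxy', mul_inv_cancel]
    have key : Odd l → ∀ r : G, r ≠ 1 → r ∈ D := by
      intro hodd r hr
      by_contra hrD
      have hg : r * r ≠ 1 := hI r hr
      have hEven : Even l := by
        rw [← hl (r * r) hg]
        apply even_card_of_invol (fun p => (p.2⁻¹, p.1⁻¹))
        · intro p hp
          simp only [Finset.mem_filter, Finset.mem_product] at hp ⊢
          refine ⟨⟨hDinv _ hp.1.2, hDinv _ hp.1.1⟩, ?_⟩
          have : p.2⁻¹ * (p.1⁻¹)⁻¹ = p.1 * p.2⁻¹ := by
            rw [inv_inv, mul_comm]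
          rw [this, hp.2]
        · intro p _; simp
        · intro p hp h
          simp only [Finset.mem_filter, Finset.mem_product] at hp
          have h1 : p.2⁻¹ = p.1 := congrArg Prod.fst h
          rw [h1] at hp
          have : p.1 = r := hsq_inj hp.2
          rw [this] at hp
          exact hrD hp.1.1
      exact (Nat.not_even_iff_odd.symm.mp hodd) hEven
    by_contra hnotE
    have hodd : Odd l := Nat.not_even_iff_odd.symm.mpr hnotE
    have hsub : Finset.univ.erase (1 : G) ⊆ D := by
      intro r hrmem
      exact key hodd r (Finset.mem_erase.mp hrmem).1
    have hk2 : 2 ≤ k := by omega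
    have hkv : k ≤ v := by
      rw [← hv, ← hk]
      exact Finset.card_le_univ D
    have hv2 : 1 < Fintype.card G := by omega
    obtain ⟨g, hg⟩ : ∃ g : G, g ≠ 1 := Fintype.exists_ne_of_one_lt_card hv2 1
    have hlg := hl g hg
    -- F ≃ S := D.filter (fun y => g * y ∈ D)
    have hcardF : ((D ×ˢ D).filter (fun p => p.1 * p.2⁻¹ = g)).card
        = (D.filter (fun y => g * y ∈ D)).card := by
      apply Finset.card_nbij' (i := fun p => p.2) (j := fun y => (g * y, y))
      · intro p hp
        simp only [Finset.mem_coe, Finset.mem_filter, Finset.mem_product] at hp ⊢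
        have hp1 : p.1 = g * p.2 := by
          rw [← hp.2, mul_assoc, inv_mul_cancel, mul_one]
        exact ⟨hp.1.2, hp1 ▸ hp.1.1⟩
      · intro y hy
        simp only [Finset.mem_coe, Finset.mem_filter, Finset.mem_product] at hy ⊢
        refine ⟨⟨hy.2, hy.1⟩, ?_⟩
        rw [mul_assoc, mul_inv_cancel, mul_one]
      · intro p hp
        simp only [Finset.mem_coe, Finset.mem_filter, Finset.mem_product] at hp
        have hp1 : p.1 = g * p.2 := by
          rw [← hp.2, mul_assoc, inv_mul_cancel, mul_one]
        exact Prod.ext hp1.symm rfl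
      · intro y _; rfl
    by_cases h1D : (1 : G) ∈ D
    · -- D = univ
      have hDuniv : D = Finset.univ := by
        apply Finset.eq_univ_iff_forall.mpr
        intro x
        by_cases hx : x = 1
        · rw [hx]; exact h1D
        · exact hsub (Finset.mem_erase.mpr ⟨hx, Finset.mem_univ x⟩)
      have : l = v := by
        rw [← hlg, hcardF, hDuniv]
        simp [hv]
      have : k = v := by rw [← hk, hDuniv, ← hv]; simp
      omega
    · -- D = univ.erase 1
      have hDeq : D = Finset.univ.erase (1 : G) := by
        apply Finset.Subset.antisymm _ hsub
        intro x hx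
        exact Finset.mem_erase.mpr ⟨fun h => h1D (h ▸ hx), Finset.mem_univ x⟩
      have hS : D.filter (fun y => g * y ∈ D) = (Finset.univ.erase g⁻¹).erase (1 : G) := by
        ext y
        simp only [Finset.mem_filter, hDeq, Finset.mem_erase, Finset.mem_univ, and_true]
        constructor
        · rintro ⟨hy1, hgy⟩
          refine ⟨hy1, fun h => hgy ?_⟩
          rw [h, mul_inv_cancel]
        · rintro ⟨hy1, hyg⟩
          refine ⟨hy1, fun h => hyg ?_⟩
          rw [eq_inv_iff_mul_eq_one, mul_comm, h]
      have hlval : l = v - 2 := by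
        rw [← hlg, hcardF, hS]
        rw [Finset.card_erase_of_mem, Finset.card_erase_of_mem (Finset.mem_univ _)]
        · simp only [Finset.card_univ, hv]
          omega
        · exact Finset.mem_erase.mpr ⟨fun h => hg (by rw [← inv_inv g, ← h, inv_one]),
            Finset.mem_univ _⟩
      have hkval : k = v - 1 := by
        rw [← hk, hDeq, Finset.card_erase_of_mem (Finset.mem_univ _), Finset.card_univ, hv]
      omega
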